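/- Let n > 2, m ∈ ℝ with |m| > n/2, and set δ = m² − n²/4 > 0. Let V(r) = r^2 + 2M/r^(n−2) − e^2/r^(n−1) − 1 with M > 0, e ≥ 0, and define θ(r) = −(n/2)(n/2 − 1)/r² + m²/V(r) + (n/(2r))(1/r − V'(r)/V(r)). Then there exists r_0 such that θ(r) > 0 for all r ≥ r_0. -/

import Mathlib

/-- The Reissner–Nordström–de Sitter potential V(r) = r² + 2M/r^(n−2) − e²/r^(n−1) − 1. -/
noncomputable def Vfun (n : ℕ) (M e : ℝ) : ℝ → ℝ :=
  fun r => r ^ 2 + 2 * M / r ^ (n - 2) - e ^ 2 / r ^ (n - 1) - 1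

open Filter Topology

lemma hasDerivAt_Vfun (k : ℕ) (M e r : ℝ) (hr : r ≠ 0) :
    HasDerivAt (Vfun (k+3) M e)
      (2 * r - 2 * M * (k + 1) / r ^ (k + 2) + e ^ 2 * (k + 2) / r ^ (k + 3)) r := by
  have hp1 : HasDerivAt (fun x : ℝ => x ^ (k+1)) ((k+1) * r ^ k) r := by
    simpa using hasDerivAt_pow (k+1) r
  have hp2 : HasDerivAt (fun x : ℝ => x ^ (k+2)) ((k+2) * r ^ (k+1)) r := by
    simpa using hasDerivAt_pow (k+2) r
  have hsq : HasDerivAt (fun x : ℝ => x ^ 2) (2 * r) r := by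
    simpa using hasDerivAt_pow 2 r
  have hd1 : HasDerivAt (fun x : ℝ => 2 * M / x ^ (k+1))
      ((0 * r ^ (k+1) - 2 * M * ((k+1) * r ^ k)) / (r ^ (k+1)) ^ 2) r :=
    (hasDerivAt_const r (2*M)).div hp1 (pow_ne_zero _ hr)
  have hd2 : HasDerivAt (fun x : ℝ => e ^ 2 / x ^ (k+2))
      ((0 * r ^ (k+2) - e ^ 2 * ((k+2) * r ^ (k+1))) / (r ^ (k+2)) ^ 2) r :=
    (hasDerivAt_const r (e^2)).div hp2 (pow_ne_zero _ hr)
  have h := ((hsq.add hd1).sub hd2).sub_const 1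
  refine h.congr_deriv ?_
  field_simp
  ring

lemma tendsto_V_div_sq (k : ℕ) (M e : ℝ) :
    Tendsto (fun r => Vfun (k+3) M e r / r ^ 2) atTop (𝓝 1) := by
  have heq : ∀ᶠ r : ℝ in atTop,
      Vfun (k+3) M e r / r ^ 2
        = 1 + 2 * M / r ^ (k + 3) - e ^ 2 / r ^ (k + 4) - 1 / r ^ 2 := by
    filter_upwards [eventually_gt_atTop (0:ℝ)] with r hr
    have hr' : r ≠ 0 := ne_of_gt hr
    show (r ^ 2 + 2 * M / r ^ (k + 1) - e ^ 2 / r ^ (k + 2) - 1) / r ^ 2 = _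
    field_simp
    ring
  have t1 : Tendsto (fun r : ℝ => 2 * M / r ^ (k+3)) atTop (𝓝 0) :=
    tendsto_const_nhds.div_atTop (tendsto_pow_atTop (by omega))
  have t2 : Tendsto (fun r : ℝ => e ^ 2 / r ^ (k+4)) atTop (𝓝 0) :=
    tendsto_const_nhds.div_atTop (tendsto_pow_atTop (by omega))
  have t3 : Tendsto (fun r : ℝ => 1 / r ^ 2) atTop (𝓝 0) :=
    tendsto_const_nhds.div_atTop (tendsto_pow_atTop (by omega))
  have := (((tendsto_const_nhds : Tendsto (fun _ : ℝ => (1:ℝ)) atTop (𝓝 1)).add t1).sub t2).sub t3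
  simpa using this.congr' (heq.mono fun r h => h.symm)

lemma tendsto_deriv_div (k : ℕ) (M e : ℝ) :
    Tendsto (fun r => deriv (Vfun (k+3) M e) r / r) atTop (𝓝 2) := by
  have heq : ∀ᶠ r : ℝ in atTop,
      deriv (Vfun (k+3) M e) r / r
        = 2 - 2 * M * (k+1) / r ^ (k + 3) + e ^ 2 * (k+2) / r ^ (k + 4) := by
    filter_upwards [eventually_gt_atTop (0:ℝ)] with r hr
    have hr' : r ≠ 0 := ne_of_gt hr
    rw [(hasDerivAt_Vfun k M e r hr').deriv]
    field_simp
    ring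
  have t1 : Tendsto (fun r : ℝ => 2 * M * (k+1) / r ^ (k+3)) atTop (𝓝 0) :=
    tendsto_const_nhds.div_atTop (tendsto_pow_atTop (by omega))
  have t2 : Tendsto (fun r : ℝ => e ^ 2 * (k+2) / r ^ (k+4)) atTop (𝓝 0) :=
    tendsto_const_nhds.div_atTop (tendsto_pow_atTop (by omega))
  have := ((tendsto_const_nhds : Tendsto (fun _ : ℝ => (2:ℝ)) atTop (𝓝 2)).sub t1).add t2
  simpa using this.congr' (heq.mono fun r h => h.symm)

/-- If m² > n²/4 then
θ(r) = −(n/2)(n/2−1)/r² + m²/V(r) + (n/(2r))(1/r − V'(r)/V(r)) is eventually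
positive. -/
theorem theta_eventually_positive (n : ℕ) (hn : 2 < n) (m M e : ℝ)
    (hm : (n : ℝ) ^ 2 / 4 < m ^ 2) (hM : 0 < M) (he : 0 ≤ e) :
    ∃ r0 : ℝ, ∀ r : ℝ, r0 ≤ r →
      0 < -((n : ℝ) / 2) * ((n : ℝ) / 2 - 1) / r ^ 2
          + m ^ 2 / Vfun n M e r
          + ((n : ℝ) / (2 * r)) * (1 / r - deriv (Vfun n M e) r / Vfun n M e r) := by
  obtain ⟨k, rfl⟩ : ∃ k, n = k + 3 := ⟨n - 3, by omega⟩
  set V := Vfun (k+3) M e with hV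
  set a : ℝ := ((k:ℝ) + 3) / 2 with ha
  have h1 : Tendsto (fun r => V r / r ^ 2) atTop (𝓝 1) := tendsto_V_div_sq k M e
  have h2 : Tendsto (fun r => deriv V r / r) atTop (𝓝 2) := tendsto_deriv_div k M e
  have h1inv : Tendsto (fun r => (V r / r ^ 2)⁻¹) atTop (𝓝 1) := by
    simpa using h1.inv₀ one_ne_zero
  -- the rescaled function
  set g : ℝ → ℝ := fun r =>
    -a * (a - 1) + m ^ 2 * (V r / r ^ 2)⁻¹
      + a * (1 - (deriv V r / r) * (V r / r ^ 2)⁻¹) with hg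
  have hL : Tendsto g atTop (𝓝 (-a * (a - 1) + m ^ 2 * 1 + a * (1 - 2 * 1))) := by
    exact ((tendsto_const_nhds).add (h1inv.const_mul _)).add
      (((tendsto_const_nhds).sub (h2.mul h1inv)).const_mul _)
  have hLpos : 0 < -a * (a - 1) + m ^ 2 * 1 + a * (1 - 2 * 1) := by
    have : ((k:ℝ) + 3) ^ 2 / 4 < m ^ 2 := by push_cast at hm ⊢; linarith
    simp only [ha]; nlinarith
  have hgpos : ∀ᶠ r in atTop, 0 < g r := hL.eventually (lt_mem_nhds hLpos)
  have hVpos : ∀ᶠ r in atTop, 0 < V r := by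
    filter_upwards [h1.eventually (lt_mem_nhds (show (1:ℝ)/2 < 1 by norm_num)),
      eventually_gt_atTop (0:ℝ)] with r h hr
    rw [lt_div_iff₀ (by positivity)] at h
    nlinarith
  have key : ∀ᶠ r in atTop, 0 < -(((k:ℕ)+3 : ℝ) / 2) * (((k:ℕ)+3 : ℝ) / 2 - 1) / r ^ 2
      + m ^ 2 / V r + (((k:ℕ)+3 : ℝ) / (2 * r)) * (1 / r - deriv V r / V r) := by
    filter_upwards [hgpos, hVpos, eventually_gt_atTop (0:ℝ)] with r hgr hVr hr
    have hr' : r ≠ 0 := ne_of_gt hr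
    have hV' : V r ≠ 0 := ne_of_gt hVr
    have heq : -(((k:ℕ)+3 : ℝ) / 2) * (((k:ℕ)+3 : ℝ) / 2 - 1) / r ^ 2
        + m ^ 2 / V r + (((k:ℕ)+3 : ℝ) / (2 * r)) * (1 / r - deriv V r / V r)
        = g r / r ^ 2 := by
      simp only [hg, ha]
      push_cast
      field_simp
    rw [heq]
    positivity
  obtain ⟨r0, hr0⟩ := eventually_atTop.mp key
  exact ⟨r0, fun r hr => by exact_mod_cast hr0 r hr⟩
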